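/- Let d ≥ 1, 0 ≤ q < d, and let Δ(t) ∈ ℤ[t] be a polynomial with Δ(1) = 1, written as Δ(t) = 1 + (t−1)·m + (t−1)²·Σ_l a_l t^l for some integer m (so m = Δ'(1)) and integers a_l. Then the polynomial part of the rational function H(t) = (1/d)·Σ_{ξ^d=1} ξ^{−q}·Δ(ξt)/(1 − ξt)² equals Σ_l a_{q+ld} t^{q+ld}, where the sum is over l ≥ 0 with q + ld in the support of (a_l). -/

import Mathlib

open BigOperators Filter Polynomial

lemma rootsum (d q l : ℕ) (hd : 1 ≤ d) (hq : q < d) :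
    ∑ ξ ∈ (Polynomial.nthRoots d (1 : ℂ)).toFinset, ξ⁻¹ ^ q * ξ ^ l
      = if l % d = q then (d : ℂ) else 0 := by
  obtain ⟨ζ, hζ⟩ : ∃ ζ : ℂ, IsPrimitiveRoot ζ d := ⟨_, Complex.isPrimitiveRoot_exp d (by omega)⟩
  have hnodup := hζ.nthRoots_one_nodup
  have heq : Polynomial.nthRoots d (1 : ℂ) = (Multiset.range d).map (fun i => ζ ^ i * 1) :=
    hζ.nthRoots_eq (one_pow d)
  have h1 : ∑ ξ ∈ (Polynomial.nthRoots d (1 : ℂ)).toFinset, ξ⁻¹ ^ q * ξ ^ l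
      = ((Polynomial.nthRoots d (1 : ℂ)).map (fun ξ => ξ⁻¹ ^ q * ξ ^ l)).sum := by
    rw [Finset.sum]
    congr 1
    exact congrArg _ (Multiset.dedup_eq_self.mpr hnodup)
  rw [h1, heq, Multiset.map_map]
  simp only [Function.comp, mul_one]
  have hζ0 : ζ ≠ 0 := fun h => by
    have := hζ.pow_eq_one
    rw [h, zero_pow (by omega : d ≠ 0)] at this
    exact one_ne_zero this.symm
  have key : ∀ i : ℕ, (ζ ^ i)⁻¹ ^ q * (ζ ^ i) ^ l = (ζ ^ l * ζ⁻¹ ^ q) ^ i := fun i => by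
    simp only [inv_pow, ← pow_mul, mul_pow]
    rw [Nat.mul_comm i q, Nat.mul_comm i l, mul_comm]
  simp only [key]
  have h2 : (Multiset.map (fun x => (ζ ^ l * ζ⁻¹ ^ q) ^ x) (Multiset.range d)).sum
      = ∑ i ∈ Finset.range d, (ζ ^ l * ζ⁻¹ ^ q) ^ i := rfl
  rw [h2]
  have hmod : ∀ n : ℕ, ζ ^ n = ζ ^ (n % d) := fun n => by
    conv_lhs => rw [← Nat.div_add_mod n d]
    rw [pow_add, pow_mul, hζ.pow_eq_one, one_pow, one_mul]
  have hu1 : ζ ^ l * ζ⁻¹ ^ q = 1 ↔ l % d = q := by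
    rw [inv_pow, mul_inv_eq_one₀ (pow_ne_zero _ hζ0), hmod l]
    constructor
    · exact fun h => hζ.pow_inj (Nat.mod_lt _ (by omega)) hq h
    · exact fun h => by rw [h]
  by_cases hc : l % d = q
  · rw [if_pos hc, hu1.mpr hc]
    simp
  · rw [if_neg hc]
    have hu : ζ ^ l * ζ⁻¹ ^ q ≠ 1 := fun h => hc (hu1.mp h)
    rw [geom_sum_eq hu]
    have : (ζ ^ l * ζ⁻¹ ^ q) ^ d = 1 := by
      rw [mul_pow, ← pow_mul, ← pow_mul, Nat.mul_comm l d, Nat.mul_comm q d, pow_mul, pow_mul,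
        hζ.pow_eq_one, inv_pow, hζ.pow_eq_one, one_pow, inv_one, one_pow, one_mul]
    rw [this, sub_self, zero_div]

theorem stmt18 (d q : ℕ) (hd : 1 ≤ d) (hq : q < d)
    (Δ : Polynomial ℂ) (m : ℤ) (a : ℕ →₀ ℤ)
    -- `Δ(t) = 1 + (t-1)·m + (t-1)² Σ_l a_l t^l`
    (hΔ : Δ = 1 + (Polynomial.X - 1) * Polynomial.C ((m : ℂ))
        + (Polynomial.X - 1) ^ 2 * ∑ l ∈ a.support, Polynomial.C ((a l : ℂ)) * Polynomial.X ^ l) :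
    -- the polynomial part of `H(t) = (1/d) Σ_{ξ^d=1} ξ^{-q} Δ(ξt)/(1-ξt)²` is
    -- `Σ_l a_{q+ld} t^{q+ld}`, i.e. their difference tends to `0` at infinity
    Filter.Tendsto
      (fun x : ℝ =>
        (1 / (d : ℂ)) * ∑ ξ ∈ (Polynomial.nthRoots d (1 : ℂ)).toFinset,
            ξ⁻¹ ^ q * Δ.eval (ξ * (x : ℂ)) / (1 - ξ * (x : ℂ)) ^ 2
          - ∑ l ∈ a.support, if l % d = q then (a l : ℂ) * (x : ℂ) ^ l else 0)
      Filter.atTop (nhds 0) := by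
  have hd0 : (d : ℂ) ≠ 0 := Nat.cast_ne_zero.mpr (by omega)
  set R := (Polynomial.nthRoots d (1 : ℂ)).toFinset with hR
  -- norm of roots
  have hnorm : ∀ ξ ∈ R, ‖ξ‖ = 1 := by
    intro ξ hξ
    have h1 : ξ ^ d = 1 := (Polynomial.mem_nthRoots (by omega : 0 < d)).mp
      (Multiset.mem_toFinset.mp hξ)
    have h2 : ‖ξ‖ ^ d = 1 := by rw [← norm_pow, h1, norm_one]
    rcases lt_trichotomy ‖ξ‖ 1 with h | h | h
    · exact absurd h2 (by have := pow_lt_one₀ (norm_nonneg ξ) h (by omega : d ≠ 0); linarith)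
    · exact h
    · exact absurd h2 (by have := one_lt_pow₀ h (by omega : d ≠ 0); linarith)
  -- the tail function
  set g : ℝ → ℂ := fun x => (1 / (d : ℂ)) * ∑ ξ ∈ R,
      (ξ⁻¹ ^ q * ((1 - ξ * (x : ℂ))⁻¹) ^ 2 - (m : ℂ) * ξ⁻¹ ^ q * (1 - ξ * (x : ℂ))⁻¹) with hg
  have hcongr : ∀ᶠ x : ℝ in atTop,
      (1 / (d : ℂ)) * ∑ ξ ∈ R, ξ⁻¹ ^ q * Δ.eval (ξ * (x : ℂ)) / (1 - ξ * (x : ℂ)) ^ 2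
        - ∑ l ∈ a.support, (if l % d = q then (a l : ℂ) * (x : ℂ) ^ l else 0) = g x := by
    filter_upwards [eventually_ge_atTop (2 : ℝ)] with x hx
    set z : ℂ := (x : ℂ) with hzdef
    have hz : ∀ ξ ∈ R, 1 - ξ * z ≠ 0 := by
      intro ξ hξ h
      have h1 : (1 : ℂ) = ξ * z := sub_eq_zero.mp h
      have := congrArg norm h1
      rw [norm_one, norm_mul, hnorm ξ hξ, one_mul, hzdef, Complex.norm_real,
        Real.norm_eq_abs, abs_of_nonneg (by linarith)] at this
      linarith
    have hev : ∀ w : ℂ, Δ.eval w = 1 + (w - 1) * (m : ℂ)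
        + (w - 1) ^ 2 * ∑ l ∈ a.support, (a l : ℂ) * w ^ l := by
      intro w
      simp [hΔ, Polynomial.eval_finset_sum]
    have step : ∀ ξ ∈ R, ξ⁻¹ ^ q * Δ.eval (ξ * z) / (1 - ξ * z) ^ 2
        = (ξ⁻¹ ^ q * ((1 - ξ * z)⁻¹) ^ 2 - (m : ℂ) * ξ⁻¹ ^ q * (1 - ξ * z)⁻¹)
          + ∑ l ∈ a.support, (a l : ℂ) * (ξ⁻¹ ^ q * ξ ^ l) * z ^ l := by
      intro ξ hξ
      have hy := hz ξ hξ
      have hS : ∑ l ∈ a.support, (a l : ℂ) * (ξ⁻¹ ^ q * ξ ^ l) * z ^ l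
          = ξ⁻¹ ^ q * ∑ l ∈ a.support, (a l : ℂ) * (ξ * z) ^ l := by
        rw [Finset.mul_sum]
        exact Finset.sum_congr rfl fun l _ => by rw [mul_pow]; ring
      have hξ0 : ξ ≠ 0 := by
        intro h0
        have h5 := hnorm ξ hξ
        rw [h0] at h5
        simp at h5
      rw [hev, hS, div_eq_mul_inv, ← inv_pow]
      set SS := ∑ l ∈ a.support, (a l : ℂ) * (ξ * z) ^ l with hSS
      set v := (1 - ξ * z)⁻¹ with hvdef
      have hv : v * (1 - ξ * z) = 1 := inv_mul_cancel₀ hy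
      linear_combination (ξ⁻¹ ^ q * (-(m : ℂ) * v + SS * (v * (1 - ξ * z) + 1))) * hv
    rw [Finset.sum_congr rfl step, Finset.sum_add_distrib, Finset.sum_comm, mul_add, hg]
    have hinner : ∀ l ∈ a.support, ∑ ξ ∈ R, (a l : ℂ) * (ξ⁻¹ ^ q * ξ ^ l) * z ^ l
        = (a l : ℂ) * z ^ l * (if l % d = q then (d : ℂ) else 0) := by
      intro l _
      rw [← Finset.sum_mul, ← Finset.mul_sum, hR, rootsum d q l hd hq]
      ring
    rw [Finset.sum_congr rfl hinner]
    have : (1 / (d : ℂ)) * ∑ l ∈ a.support,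
        (a l : ℂ) * z ^ l * (if l % d = q then (d : ℂ) else 0)
        = ∑ l ∈ a.support, (if l % d = q then (a l : ℂ) * z ^ l else 0) := by
      rw [Finset.mul_sum]
      refine Finset.sum_congr rfl fun l _ => ?_
      by_cases hc : l % d = q <;> simp [hc] <;> field_simp
    rw [this]
    ring
  refine Tendsto.congr' (by filter_upwards [hcongr] with x hx using hx.symm) ?_
  have hzero : ∀ ξ ∈ R, Tendsto (fun x : ℝ => (1 - ξ * (x : ℂ))⁻¹) atTop (nhds 0) := by
    intro ξ hξ
    apply tendsto_inv₀_cobounded.comp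
    rw [← tendsto_norm_atTop_iff_cobounded]
    refine tendsto_atTop_mono' atTop ?_ (tendsto_atTop_add_const_right _ (-1) tendsto_id)
    · filter_upwards [eventually_ge_atTop (0 : ℝ)] with x hx
      calc x - 1 = ‖ξ * (x : ℂ)‖ - ‖(1 : ℂ)‖ := by
            rw [norm_mul, hnorm ξ hξ, one_mul, Complex.norm_real, Real.norm_eq_abs,
              abs_of_nonneg hx, norm_one]
        _ ≤ ‖1 - ξ * (x : ℂ)‖ := by
            have := norm_sub_norm_le (1 : ℂ) (ξ * (x : ℂ))
            have := norm_sub_norm_le (ξ * (x : ℂ)) (1 : ℂ)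
            rw [← norm_neg (ξ * (x:ℂ) - 1)] at this
            simp only [neg_sub] at this
            linarith
  have : Tendsto (fun x : ℝ => ∑ ξ ∈ R,
      (ξ⁻¹ ^ q * ((1 - ξ * (x : ℂ))⁻¹) ^ 2 - (m : ℂ) * ξ⁻¹ ^ q * (1 - ξ * (x : ℂ))⁻¹))
      atTop (nhds 0) := by
    have hsz : (0 : ℂ) = ∑ _ξ ∈ R, (0 : ℂ) := by simp
    rw [hsz]
    apply tendsto_finset_sum
    intro ξ hξ
    have h1 := hzero ξ hξ
    have h2 : Tendsto (fun x : ℝ => ξ⁻¹ ^ q * ((1 - ξ * (x : ℂ))⁻¹) ^ 2) atTop (nhds 0) := by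
      have := (h1.pow 2).const_mul (ξ⁻¹ ^ q)
      simpa using this
    have h3 : Tendsto (fun x : ℝ => (m : ℂ) * ξ⁻¹ ^ q * (1 - ξ * (x : ℂ))⁻¹) atTop (nhds 0) := by
      have := h1.const_mul ((m : ℂ) * ξ⁻¹ ^ q)
      simpa using this
    simpa using h2.sub h3
  have := this.const_mul (1 / (d : ℂ))
  simpa [hg] using this
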